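/- For all integers m ≥ 0 and k ≥ 0, B_S(m,k) = ∑_{j=0}^{m} ∑_{i=0}^{⌊(m+1)/2⌋} C(⌊(m+1)/2⌋, i) · S(i+⌊m/2⌋, m−j) · ∑_{l=0}^{⌊m/2⌋} C(⌊m/2⌋, l) · S(l+⌊(m+1)/2⌋, m−k+j). -/

import Mathlib

open Finset

/-- Stirling number of the second kind `S(n,l)`. -/
def stirling2 : ℕ → ℕ → ℕ
  | 0, 0 => 1
  | 0, _ + 1 => 0
  | _ + 1, 0 => 0
  | n + 1, l + 1 => (l + 1) * stirling2 n (l + 1) + stirling2 n l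

/-- Stirling number of the second kind with integer lower argument, extended by
`S(n,l) = 0` whenever `l < 0`. -/
def stirlingZ (n : ℕ) (l : ℤ) : ℕ := if 0 ≤ l then stirling2 n l.toNat else 0

/-- `bishopCount m k` is the number of `k`-element subsets `P` of `{1,…,m} × {1,…,m}`
such that any two distinct elements `(i,j)` and `(i',j')` of `P` satisfy
`i+j ≠ i'+j'` and `i−j ≠ i'−j'` (nonattacking bishops on the `m × m` board). -/
def bishopCount (m k : ℕ) : ℕ :=
  (((Finset.Icc 1 m ×ˢ Finset.Icc 1 m).powersetCard k).filter
    (fun P => ∀ a ∈ P, ∀ b ∈ P, a ≠ b →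
      a.1 + a.2 ≠ b.1 + b.2 ∧ (a.1 : ℤ) - a.2 ≠ (b.1 : ℤ) - b.2)).card

lemma stirling2_zero_succ (l : ℕ) : stirling2 0 (l+1) = 0 := rfl
lemma stirling2_succ_zero (n : ℕ) : stirling2 (n+1) 0 = 0 := rfl
lemma stirling2_succ (n l : ℕ) :
    stirling2 (n+1) (l+1) = (l+1) * stirling2 n (l+1) + stirling2 n l := rfl

lemma stirling2_eq_zero_of_lt : ∀ {n l : ℕ}, n < l → stirling2 n l = 0 := by
  intro n
  induction n with
  | zero => intro l h; match l, h with | l+1, _ => rfl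
  | succ n ih =>
    intro l h
    match l, h with
    | l+1, h =>
      rw [stirling2_succ, ih (by omega), ih (by omega)]
      simp

lemma stirlingZ_neg {n : ℕ} {r : ℤ} (h : r < 0) : stirlingZ n r = 0 := by
  simp [stirlingZ, not_le.2 h]

lemma stirlingZ_eq_zero {n : ℕ} {r : ℤ} (h : (n : ℤ) < r) : stirlingZ n r = 0 := by
  rcases le_or_gt 0 r with h0 | h0
  · simp only [stirlingZ, if_pos h0]
    exact stirling2_eq_zero_of_lt (by omega)
  · exact stirlingZ_neg h0

lemma stirlingZ_succ (n : ℕ) (r : ℤ) :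
    stirlingZ (n+1) r = r.toNat * stirlingZ n r + stirlingZ n (r-1) := by
  rcases lt_trichotomy r 0 with h | h | h
  · rw [stirlingZ_neg h, stirlingZ_neg h, stirlingZ_neg (by omega)]; ring
  · subst h
    simp [stirlingZ, stirling2_succ_zero]
  · obtain ⟨l, rfl⟩ : ∃ l : ℕ, r = (l : ℤ) + 1 := ⟨(r - 1).toNat, by omega⟩
    have h1 : ((l:ℤ)+1).toNat = l + 1 := by omega
    have h2 : ((l:ℤ)+1-1) = (l:ℤ) := by ring
    simp only [stirlingZ, if_pos (by omega : (0:ℤ) ≤ (l:ℤ)+1), h1, h2,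
      if_pos (Int.ofNat_nonneg l), Int.toNat_natCast]
    exact stirling2_succ n l

lemma stirling2_self : ∀ n : ℕ, stirling2 n n = 1 := by
  intro n
  induction n with
  | zero => rfl
  | succ n ih =>
    rw [stirling2_succ, stirling2_eq_zero_of_lt (by omega), ih]
    simp

lemma stirlingZ_self (n : ℕ) : stirlingZ n (n:ℤ) = 1 := by
  simp only [stirlingZ, if_pos (Int.ofNat_nonneg n), Int.toNat_natCast]
  exact stirling2_self n

def sumS (a b : ℕ) (r : ℤ) : ℕ :=
  ∑ i ∈ range (a+1), Nat.choose a i * stirlingZ (i + b) r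

lemma sumS_of_neg {a b : ℕ} {r : ℤ} (h : r < 0) : sumS a b r = 0 := by
  unfold sumS
  refine Finset.sum_eq_zero fun i _ => ?_
  rw [stirlingZ_neg h, mul_zero]

lemma sumS_of_big {a b : ℕ} {r : ℤ} (h : ((a+b : ℕ) : ℤ) < r) : sumS a b r = 0 := by
  unfold sumS
  refine Finset.sum_eq_zero fun i hi => ?_
  simp only [mem_range] at hi
  rw [stirlingZ_eq_zero (by push_cast; omega), mul_zero]

lemma sumS_shift (a b : ℕ) (r : ℤ) :
    sumS a (b+1) r = r.toNat * sumS a b r + sumS a b (r-1) := by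
  unfold sumS
  rw [Finset.mul_sum, ← Finset.sum_add_distrib]
  refine Finset.sum_congr rfl fun i _ => ?_
  have : i + (b+1) = (i+b) + 1 := by omega
  rw [this, stirlingZ_succ]
  ring

lemma sumS_pascal (a b : ℕ) (r : ℤ) :
    sumS (a+1) b r = sumS a b r + sumS a (b+1) r := by
  unfold sumS
  have h0 : ∑ i ∈ range (a+1+1), Nat.choose (a+1) i * stirlingZ (i+b) r
      = (∑ i ∈ range (a+1), Nat.choose (a+1) (i+1) * stirlingZ (i+1+b) r)
        + Nat.choose (a+1) 0 * stirlingZ (0+b) r := Finset.sum_range_succ' _ _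
  have h2 : ∑ i ∈ range (a+1), Nat.choose (a+1) (i+1) * stirlingZ (i+1+b) r
      = ∑ i ∈ range (a+1), Nat.choose a (i+1) * stirlingZ (i+1+b) r
        + ∑ i ∈ range (a+1), Nat.choose a i * stirlingZ (i+(b+1)) r := by
    rw [← Finset.sum_add_distrib]
    refine Finset.sum_congr rfl fun i _ => ?_
    have h1 : (a+1).choose (i+1) = a.choose i + a.choose (i+1) := Nat.choose_succ_succ a i
    have h5 : i + 1 + b = i + (b+1) := by omega
    rw [h1, h5]; ring
  have h3 : ∑ i ∈ range (a+1+1), Nat.choose a i * stirlingZ (i+b) r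
      = (∑ i ∈ range (a+1), Nat.choose a (i+1) * stirlingZ (i+1+b) r)
        + Nat.choose a 0 * stirlingZ (0+b) r := Finset.sum_range_succ' _ _
  have h4 : ∑ i ∈ range (a+1+1), Nat.choose a i * stirlingZ (i+b) r
      = ∑ i ∈ range (a+1), Nat.choose a i * stirlingZ (i+b) r := by
    rw [Finset.sum_range_succ, Nat.choose_succ_self, zero_mul, add_zero]
  simp only [Nat.choose_zero_right, one_mul] at h0 h3
  omega

def Af (m j : ℕ) : ℕ := sumS ((m+1)/2) (m/2) ((m:ℤ) - j)

def Bf (m : ℕ) (z : ℤ) : ℕ := sumS (m/2) ((m+1)/2) ((m:ℤ) - z)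

lemma Af_eq_zero {m j : ℕ} (h : m < j) : Af m j = 0 :=
  sumS_of_neg (by omega)

lemma Bf_eq_zero {m : ℕ} {z : ℤ} (h : z < 0) : Bf m z = 0 :=
  sumS_of_big (by omega)

lemma Bf_eq_zero' {m : ℕ} {z : ℤ} (h : (m:ℤ) < z) : Bf m z = 0 :=
  sumS_of_neg (by omega)

lemma sumS_diag {a b : ℕ} : sumS a b ((a:ℤ) + b) = 1 := by
  unfold sumS
  rw [Finset.sum_range_succ]
  have h1 : ∑ i ∈ range a, Nat.choose a i * stirlingZ (i+b) ((a:ℤ)+b) = 0 := by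
    refine Finset.sum_eq_zero fun i hi => ?_
    simp only [mem_range] at hi
    rw [stirlingZ_eq_zero (by push_cast; omega), mul_zero]
  have h2 : ((a:ℤ) + b) = ((a + b : ℕ) : ℤ) := by push_cast; ring
  rw [h1, h2, stirlingZ_self, Nat.choose_self]

lemma Af_zero (m : ℕ) : Af m 0 = 1 := by
  unfold Af
  have : ((m:ℤ) - (0:ℕ)) = (((m+1)/2 : ℕ) : ℤ) + (m/2 : ℕ) := by push_cast; omega
  rw [this, sumS_diag]

lemma Bf_zero (m : ℕ) : Bf m 0 = 1 := by
  unfold Bf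
  have : ((m:ℤ) - (0:ℤ)) = ((m/2 : ℕ) : ℤ) + ((m+1)/2 : ℕ) := by push_cast; omega
  rw [this, sumS_diag]

lemma Af_succ_even (t j : ℕ) :
    Af (2*t+1) (j+1) = Af (2*t) (j+1) + (2*t+1-j) * Af (2*t) j := by
  have e1 : (2*t+1+1)/2 = t+1 := by omega
  have e2 : (2*t+1)/2 = t := by omega
  have e3 : (2*t)/2 = t := by omega
  have e4 : (2*t+1)/2 = t := by omega
  simp only [Af, e1, e2, e3, e4]
  have er1 : ((2*t+1:ℕ) : ℤ) - ((j+1:ℕ):ℤ) = ((2*t:ℕ):ℤ) - j := by push_cast; omega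
  have er2 : ((2*t:ℕ):ℤ) - ((j+1:ℕ):ℤ) = (((2*t:ℕ):ℤ) - j) - 1 := by push_cast; omega
  rw [er1, er2, sumS_pascal t t (((2*t:ℕ):ℤ) - j), sumS_shift t t (((2*t:ℕ):ℤ) - j)]
  rcases le_or_gt j (2*t) with hj | hj
  · have h5 : (((2*t:ℕ):ℤ) - j).toNat = 2*t-j := by omega
    have h6 : 2*t+1-j = (2*t-j)+1 := by omega
    rw [h5, h6]; ring
  · have hz : sumS t t (((2*t:ℕ):ℤ) - j) = 0 := sumS_of_neg (by omega)
    rw [hz]; ring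

lemma Af_succ_odd (t j : ℕ) :
    Af (2*t+2) (j+1) = Af (2*t+1) (j+1) + (2*t+1-j) * Af (2*t+1) j := by
  have e1 : (2*t+2+1)/2 = t+1 := by omega
  have e2 : (2*t+2)/2 = t+1 := by omega
  have e3 : (2*t+1+1)/2 = t+1 := by omega
  have e4 : (2*t+1)/2 = t := by omega
  simp only [Af, e1, e2, e3, e4]
  have er1 : ((2*t+2:ℕ) : ℤ) - ((j+1:ℕ):ℤ) = ((2*t+1:ℕ):ℤ) - j := by push_cast; omega
  have er2 : ((2*t+1:ℕ):ℤ) - ((j+1:ℕ):ℤ) = (((2*t+1:ℕ):ℤ) - j) - 1 := by push_cast; omega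
  rw [er1, er2, sumS_shift (t+1) t (((2*t+1:ℕ):ℤ) - j)]
  rcases le_or_gt j (2*t+1) with hj | hj
  · have h5 : (((2*t+1:ℕ):ℤ) - j).toNat = 2*t+1-j := by omega
    rw [h5]; ring
  · have hz : sumS (t+1) t (((2*t+1:ℕ):ℤ) - j) = 0 := sumS_of_neg (by omega)
    rw [hz]
    have h6 : 2*t+1-j = 0 := by omega
    rw [h6]; ring

lemma Bf_succ_even (t j : ℕ) :
    Bf (2*t+1) ((j:ℤ)+1) = Bf (2*t) ((j:ℤ)+1) + (2*t-j) * Bf (2*t) j := by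
  have e1 : (2*t+1+1)/2 = t+1 := by omega
  have e2 : (2*t+1)/2 = t := by omega
  have e3 : (2*t)/2 = t := by omega
  simp only [Bf, e1, e2, e3]
  have er1 : ((2*t+1:ℕ) : ℤ) - ((j:ℤ)+1) = ((2*t:ℕ):ℤ) - j := by push_cast; omega
  have er2 : ((2*t:ℕ):ℤ) - ((j:ℤ)+1) = (((2*t:ℕ):ℤ) - j) - 1 := by push_cast; omega
  rw [er1, er2, sumS_shift t t (((2*t:ℕ):ℤ) - j)]
  rcases le_or_gt j (2*t) with hj | hj
  · have h5 : (((2*t:ℕ):ℤ) - j).toNat = 2*t-j := by omega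
    rw [h5]; ring
  · have hz : sumS t t (((2*t:ℕ):ℤ) - j) = 0 := sumS_of_neg (by omega)
    rw [hz]
    have h6 : 2*t-j = 0 := by omega
    rw [h6]; ring

lemma Bf_succ_odd (t j : ℕ) :
    Bf (2*t+2) ((j:ℤ)+1) = Bf (2*t+1) ((j:ℤ)+1) + (2*t+2-j) * Bf (2*t+1) j := by
  have e1 : (2*t+2+1)/2 = t+1 := by omega
  have e2 : (2*t+2)/2 = t+1 := by omega
  have e3 : (2*t+1+1)/2 = t+1 := by omega
  have e4 : (2*t+1)/2 = t := by omega
  simp only [Bf, e1, e2, e3, e4]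
  have er1 : ((2*t+2:ℕ) : ℤ) - ((j:ℤ)+1) = ((2*t+1:ℕ):ℤ) - j := by push_cast; omega
  have er2 : ((2*t+1:ℕ):ℤ) - ((j:ℤ)+1) = (((2*t+1:ℕ):ℤ) - j) - 1 := by push_cast; omega
  rw [er1, er2, sumS_pascal t (t+1) (((2*t+1:ℕ):ℤ) - j),
    sumS_shift t (t+1) (((2*t+1:ℕ):ℤ) - j)]
  rcases le_or_gt j (2*t+1) with hj | hj
  · have h5 : (((2*t+1:ℕ):ℤ) - j).toNat = 2*t+1-j := by omega
    have h6 : 2*t+2-j = (2*t+1-j)+1 := by omega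
    rw [h5, h6]; ring
  · have hz : sumS t (t+1) (((2*t+1:ℕ):ℤ) - j) = 0 := sumS_of_neg (by omega)
    rw [hz]
    have h6 : 2*t+2-j = 0 := by omega
    rw [h6]; ring

/-- number of k-subsets of B with both coordinates injective -/
def nkA {α : Type} [DecidableEq α] (r c : α → ℤ) (B : Finset α) (k : ℕ) : ℕ :=
  ((B.powersetCard k).filter
    (fun P => ∀ a ∈ P, ∀ b ∈ P, a ≠ b → r a ≠ r b ∧ c a ≠ c b)).card

lemma nkA_zero {α : Type} [DecidableEq α] (r c : α → ℤ) (B : Finset α) :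
    nkA r c B 0 = 1 := by
  unfold nkA
  rw [Finset.powersetCard_zero, Finset.filter_singleton]
  simp

lemma nkA_empty {α : Type} [DecidableEq α] (r c : α → ℤ) (k : ℕ) :
    nkA r c (∅ : Finset α) (k+1) = 0 := by
  unfold nkA
  rw [Finset.powersetCard_eq_empty.2 (by simp)]
  simp

lemma nkA_image {α β : Type} [DecidableEq α] [DecidableEq β] (r c : α → ℤ)
    (r' c' : β → ℤ) (f : α → β) (B : Finset α) (k : ℕ)
    (hinj : Set.InjOn f B)
    (hr : ∀ a ∈ B, ∀ b ∈ B, (r a = r b ↔ r' (f a) = r' (f b)))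
    (hc : ∀ a ∈ B, ∀ b ∈ B, (c a = c b ↔ c' (f a) = c' (f b))) :
    nkA r c B k = nkA r' c' (B.image f) k := by
  unfold nkA
  refine Finset.card_bij (fun P _ => P.image f) ?_ ?_ ?_
  · intro P hP
    simp only [Finset.mem_filter, Finset.mem_powersetCard] at hP ⊢
    obtain ⟨⟨hPB, hPk⟩, hpred⟩ := hP
    refine ⟨⟨Finset.image_subset_image hPB, ?_⟩, ?_⟩
    · rw [Finset.card_image_of_injOn (hinj.mono (by exact_mod_cast hPB))]
      exact hPk
    · intro x hx y hy hxy
      simp only [Finset.mem_image] at hx hy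
      obtain ⟨a, ha, rfl⟩ := hx
      obtain ⟨b, hb, rfl⟩ := hy
      have hab : a ≠ b := fun h => hxy (by rw [h])
      obtain ⟨h1, h2⟩ := hpred a ha b hb hab
      exact ⟨fun h => h1 ((hr a (hPB ha) b (hPB hb)).2 h),
             fun h => h2 ((hc a (hPB ha) b (hPB hb)).2 h)⟩
  · intro P hP Q hQ hPQ
    simp only [Finset.mem_filter, Finset.mem_powersetCard] at hP hQ
    have hPB := hP.1.1
    have hQB := hQ.1.1
    have hPQ' : P.image f = Q.image f := hPQ
    ext a
    constructor
    · intro ha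
      have h0 : f a ∈ Q.image f := hPQ' ▸ Finset.mem_image_of_mem f ha
      obtain ⟨b, hb, hba⟩ := Finset.mem_image.1 h0
      exact hinj (hQB hb) (hPB ha) hba ▸ hb
    · intro ha
      have h0 : f a ∈ P.image f := hPQ' ▸ Finset.mem_image_of_mem f ha
      obtain ⟨b, hb, hba⟩ := Finset.mem_image.1 h0
      exact hinj (hPB hb) (hQB ha) hba ▸ hb
  · intro Q hQ
    simp only [Finset.mem_filter, Finset.mem_powersetCard] at hQ
    obtain ⟨⟨hQB, hQk⟩, hpred⟩ := hQ
    set P := B.filter (fun a => f a ∈ Q) with hPdef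
    have hPB : P ⊆ B := Finset.filter_subset _ _
    have himg : P.image f = Q := by
      apply Finset.Subset.antisymm
      · intro x hx
        obtain ⟨a, ha, rfl⟩ := Finset.mem_image.1 hx
        exact (Finset.mem_filter.1 ha).2
      · intro q hq
        obtain ⟨a, ha, rfl⟩ := Finset.mem_image.1 (hQB hq)
        exact Finset.mem_image_of_mem f (Finset.mem_filter.2 ⟨ha, hq⟩)
    have hcard : P.card = k := by
      rw [← hQk, ← himg]
      exact (Finset.card_image_of_injOn (hinj.mono (by exact_mod_cast hPB))).symm
    refine ⟨P, ?_, himg⟩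
    simp only [Finset.mem_filter, Finset.mem_powersetCard]
    refine ⟨⟨hPB, hcard⟩, ?_⟩
    intro a ha b hb hab
    have hfa : f a ∈ Q := (Finset.mem_filter.1 ha).2
    have hfb : f b ∈ Q := (Finset.mem_filter.1 hb).2
    have hfab : f a ≠ f b := fun h => hab (hinj (hPB ha) (hPB hb) h)
    obtain ⟨h1, h2⟩ := hpred (f a) hfa (f b) hfb hfab
    exact ⟨fun h => h1 ((hr a (hPB ha) b (hPB hb)).1 h),
           fun h => h2 ((hc a (hPB ha) b (hPB hb)).1 h)⟩

lemma nkA_union_conv {α : Type} [DecidableEq α] (r c : α → ℤ) (B₀ B₁ : Finset α) (k : ℕ)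
    (hd : ∀ a ∈ B₀, ∀ b ∈ B₁, r a ≠ r b ∧ c a ≠ c b) :
    nkA r c (B₀ ∪ B₁) k = ∑ j ∈ range (k+1), nkA r c B₀ j * nkA r c B₁ (k-j) := by
  classical
  have hdisj : Disjoint B₀ B₁ := by
    rw [Finset.disjoint_left]
    intro a h0 h1
    exact (hd a h0 a h1).1 rfl
  set pred : Finset α → Prop :=
    fun P => ∀ a ∈ P, ∀ b ∈ P, a ≠ b → r a ≠ r b ∧ c a ≠ c b with hpred
  have : ∀ j B, nkA r c B j = ((B.powersetCard j).filter pred).card := fun _ _ => rfl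
  simp only [this]
  have hprod : ∀ j, ((powersetCard j B₀).filter pred).card *
      ((powersetCard (k-j) B₁).filter pred).card
      = (((powersetCard j B₀).filter pred) ×ˢ ((powersetCard (k-j) B₁).filter pred)).card :=
    fun j => (Finset.card_product _ _).symm
  simp only [hprod]
  rw [← Finset.card_sigma]
  refine Finset.card_bij (fun P _ => (⟨(P ∩ B₀).card, (P ∩ B₀, P ∩ B₁)⟩ :
      (_ : ℕ) × (Finset α × Finset α))) ?_ ?_ ?_
  · intro P hP
    simp only [Finset.mem_filter, Finset.mem_powersetCard] at hP
    obtain ⟨⟨hPB, hPk⟩, hp⟩ := hP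
    have hsplit : (P ∩ B₀) ∪ (P ∩ B₁) = P := by
      rw [← Finset.inter_union_distrib_left]
      exact Finset.inter_eq_left.2 hPB
    have hdisj2 : Disjoint (P ∩ B₀) (P ∩ B₁) :=
      hdisj.mono (Finset.inter_subset_right) (Finset.inter_subset_right)
    have hcards : (P ∩ B₀).card + (P ∩ B₁).card = k := by
      rw [← Finset.card_union_of_disjoint hdisj2, hsplit, hPk]
    refine Finset.mem_sigma.2 ⟨Finset.mem_range.2 (show (P ∩ B₀).card < k+1 by omega), Finset.mem_product.2 ⟨?_, ?_⟩⟩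
    · refine Finset.mem_filter.2 ⟨Finset.mem_powersetCard.2
        ⟨Finset.inter_subset_right, rfl⟩, ?_⟩
      intro a ha b hb hab
      exact hp a (Finset.inter_subset_left ha) b (Finset.inter_subset_left hb) hab
    · refine Finset.mem_filter.2 ⟨Finset.mem_powersetCard.2
        ⟨Finset.inter_subset_right, show (P ∩ B₁).card = k - (P ∩ B₀).card by omega⟩, ?_⟩
      intro a ha b hb hab
      exact hp a (Finset.inter_subset_left ha) b (Finset.inter_subset_left hb) hab
  · intro P hP Q hQ h
    simp only [Finset.mem_filter, Finset.mem_powersetCard] at hP hQ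
    have h' : (⟨(P ∩ B₀).card, (P ∩ B₀, P ∩ B₁)⟩ : (_ : ℕ) × (Finset α × Finset α))
        = ⟨(Q ∩ B₀).card, (Q ∩ B₀, Q ∩ B₁)⟩ := h
    have h0 : P ∩ B₀ = Q ∩ B₀ := by
      have := congrArg (fun s => s.2.1) h'
      simpa using this
    have h1 : P ∩ B₁ = Q ∩ B₁ := by
      have := congrArg (fun s => s.2.2) h'
      simpa using this
    have hsp : (P ∩ B₀) ∪ (P ∩ B₁) = P := by
      rw [← Finset.inter_union_distrib_left]
      exact Finset.inter_eq_left.2 hP.1.1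
    have hsq : (Q ∩ B₀) ∪ (Q ∩ B₁) = Q := by
      rw [← Finset.inter_union_distrib_left]
      exact Finset.inter_eq_left.2 hQ.1.1
    rw [← hsp, ← hsq, h0, h1]
  · rintro ⟨j, P₀, P₁⟩ hT
    simp only [Finset.mem_sigma, Finset.mem_range, Finset.mem_product,
      Finset.mem_filter, Finset.mem_powersetCard] at hT
    obtain ⟨hj, ⟨⟨h0B, h0k⟩, hp0⟩, ⟨h1B, h1k⟩, hp1⟩ := hT
    have hdisj2 : Disjoint P₀ P₁ := hdisj.mono h0B h1B
    have hP0B1 : P₀ ∩ B₁ = ∅ := by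
      rw [← Finset.disjoint_iff_inter_eq_empty]
      exact (Finset.disjoint_left.2 fun a ha h => (hd a (h0B ha) a h).1 rfl)
    have hP1B0 : P₁ ∩ B₀ = ∅ := by
      rw [← Finset.disjoint_iff_inter_eq_empty]
      exact Finset.disjoint_left.2 fun a ha h => (hd a h a (h1B ha)).1 rfl
    refine ⟨P₀ ∪ P₁, ?_, ?_⟩

    · simp only [Finset.mem_filter, Finset.mem_powersetCard]
      refine ⟨⟨Finset.union_subset_union h0B h1B, ?_⟩, ?_⟩
      · rw [Finset.card_union_of_disjoint hdisj2, h0k, h1k]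
        omega
      · intro a ha b hb hab
        rcases Finset.mem_union.1 ha with ha0 | ha1 <;>
          rcases Finset.mem_union.1 hb with hb0 | hb1
        · exact hp0 a ha0 b hb0 hab
        · exact hd a (h0B ha0) b (h1B hb1)
        · exact ⟨fun h => (hd b (h0B hb0) a (h1B ha1)).1 h.symm,
                 fun h => (hd b (h0B hb0) a (h1B ha1)).2 h.symm⟩
        · exact hp1 a ha1 b hb1 hab
    · have e0 : (P₀ ∪ P₁) ∩ B₀ = P₀ := by
        rw [Finset.union_inter_distrib_right, Finset.inter_eq_left.2 h0B, hP1B0,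
          Finset.union_empty]
      have e1 : (P₀ ∪ P₁) ∩ B₁ = P₁ := by
        rw [Finset.union_inter_distrib_right, Finset.inter_eq_left.2 h1B, hP0B1,
          Finset.empty_union]
      simp only [e0, e1, h0k]

/-- Adding a dominating fresh row `R` to a board `B`. -/
lemma nkA_add_row {α : Type} [DecidableEq α] (r c : α → ℤ) (B R : Finset α) (k : ℕ)
    (hrow : ∀ x ∈ R, ∀ y ∈ R, r x = r y)
    (hcinj : ∀ x ∈ R, ∀ y ∈ R, c x = c y → x = y)
    (hfresh : ∀ x ∈ R, ∀ a ∈ B, r x ≠ r a)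
    (hdom : ∀ a ∈ B, ∃ x ∈ R, c x = c a) :
    nkA r c (B ∪ R) (k+1) = nkA r c B (k+1) + (R.card - k) * nkA r c B k := by
  classical
  have hdisj : Disjoint B R := Finset.disjoint_left.2
    (fun a haB haR => hfresh a haR a haB rfl)
  set pred : Finset α → Prop :=
    fun P => ∀ a ∈ P, ∀ b ∈ P, a ≠ b → r a ≠ r b ∧ c a ≠ c b with hpreddef
  have hnk : ∀ j (B' : Finset α), nkA r c B' j = ((B'.powersetCard j).filter pred).card :=
    fun _ _ => rfl
  set S := ((B ∪ R).powersetCard (k+1)).filter pred with hS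
  have hsplitS : S.card = (S.filter (fun P => P ∩ R = ∅)).card
      + (S.filter (fun P => ¬ P ∩ R = ∅)).card :=
    (Finset.card_filter_add_card_filter_not _).symm
  have hpart0 : S.filter (fun P => P ∩ R = ∅) = (B.powersetCard (k+1)).filter pred := by
    ext P
    simp only [hS, Finset.mem_filter, Finset.mem_powersetCard]
    constructor
    · rintro ⟨⟨⟨hPBR, hPk⟩, hp⟩, hPR⟩
      refine ⟨⟨?_, hPk⟩, hp⟩
      intro a ha
      rcases Finset.mem_union.1 (hPBR ha) with h | h
      · exact h
      · exact absurd (Finset.mem_inter.2 ⟨ha, h⟩) (by rw [hPR]; exact Finset.notMem_empty a)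
    · rintro ⟨⟨hPB, hPk⟩, hp⟩
      refine ⟨⟨⟨hPB.trans Finset.subset_union_left, hPk⟩, hp⟩, ?_⟩
      rw [← Finset.disjoint_iff_inter_eq_empty]
      exact hdisj.mono_left hPB
  have hpart1 : (S.filter (fun P => ¬ P ∩ R = ∅)).card
      = (((B.powersetCard k).filter pred).sigma
          (fun Q => R.filter (fun x => ∀ a ∈ Q, c x ≠ c a))).card := by
    refine (Finset.card_bij
      (fun (p : (_ : Finset α) × α) _ => insert p.2 p.1) ?_ ?_ ?_).symm
    · rintro ⟨Q, x⟩ hQx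
      dsimp only
      simp only [Finset.mem_sigma, Finset.mem_filter, Finset.mem_powersetCard] at hQx
      obtain ⟨⟨⟨hQB, hQk⟩, hpQ⟩, hxR, hxc⟩ := hQx
      have hxQ : x ∉ Q := fun h => Finset.disjoint_left.1 hdisj (hQB h) hxR
      have hcard : (insert x Q).card = k+1 := by
        rw [Finset.card_insert_of_notMem hxQ, hQk]
      refine Finset.mem_filter.2 ⟨Finset.mem_filter.2
        ⟨Finset.mem_powersetCard.2 ⟨?_, hcard⟩, ?_⟩, ?_⟩
      · intro a ha
        rcases Finset.mem_insert.1 ha with rfl | h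
        · exact Finset.mem_union_right _ hxR
        · exact Finset.mem_union_left _ (hQB h)
      · intro a ha b hb hab
        rcases Finset.mem_insert.1 ha with rfl | ha' <;>
          rcases Finset.mem_insert.1 hb with rfl | hb'
        · exact absurd rfl hab
        · exact ⟨hfresh a hxR b (hQB hb'), hxc b hb'⟩
        · exact ⟨fun h => hfresh b hxR a (hQB ha') h.symm,
                 fun h => hxc a ha' h.symm⟩
        · exact hpQ a ha' b hb' hab
      · intro h
        exact Finset.notMem_empty x (h ▸ Finset.mem_inter.2 ⟨Finset.mem_insert_self x Q, hxR⟩)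
    · rintro ⟨Q, x⟩ hQx ⟨Q', x'⟩ hQx' h
      simp only [Finset.mem_sigma, Finset.mem_filter, Finset.mem_powersetCard] at hQx hQx'
      obtain ⟨⟨⟨hQB, hQk⟩, hpQ⟩, hxR, hxc⟩ := hQx
      obtain ⟨⟨⟨hQB', hQk'⟩, hpQ'⟩, hxR', hxc'⟩ := hQx'
      have h' : insert x Q = insert x' Q' := h
      have hxx' : x = x' := by
        have hx1 : x ∈ insert x' Q' := h' ▸ Finset.mem_insert_self x Q
        rcases Finset.mem_insert.1 hx1 with h0 | h0
        · exact h0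
        · exact absurd (hQB' h0) (fun hb => Finset.disjoint_left.1 hdisj hb hxR)
      subst hxx'
      have hxQ : x ∉ Q := fun hh => Finset.disjoint_left.1 hdisj (hQB hh) hxR
      have hxQ' : x ∉ Q' := fun hh => Finset.disjoint_left.1 hdisj (hQB' hh) hxR
      have hQQ' : Q = Q' := by
        rw [← Finset.erase_insert hxQ, ← Finset.erase_insert hxQ', h']
      subst hQQ'
      rfl
    · intro P hP
      simp only [hS, Finset.mem_filter, Finset.mem_powersetCard] at hP
      obtain ⟨⟨⟨hPBR, hPk⟩, hp⟩, hPR⟩ := hP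
      obtain ⟨x, hx⟩ := Finset.nonempty_iff_ne_empty.2 hPR
      have hxP : x ∈ P := (Finset.mem_inter.1 hx).1
      have hxR : x ∈ R := (Finset.mem_inter.1 hx).2
      set Q := P.erase x with hQdef
      have hPinsert : P = insert x Q := (Finset.insert_erase hxP).symm
      have hQB : Q ⊆ B := by
        intro a ha
        have haP : a ∈ P := Finset.erase_subset _ _ ha
        have hax : a ≠ x := Finset.ne_of_mem_erase ha
        rcases Finset.mem_union.1 (hPBR haP) with h0 | h0
        · exact h0
        · exact absurd (hrow a h0 x hxR) (hp a haP x hxP hax).1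
      have hQk : Q.card = k := by
        rw [hQdef, Finset.card_erase_of_mem hxP, hPk]
        omega
      refine ⟨⟨Q, x⟩, ?_, hPinsert.symm⟩
      refine Finset.mem_sigma.2 ⟨Finset.mem_filter.2
        ⟨Finset.mem_powersetCard.2 ⟨hQB, hQk⟩, ?_⟩, Finset.mem_filter.2 ⟨hxR, ?_⟩⟩
      · intro a ha b hb hab
        exact hp a (Finset.erase_subset _ _ ha) b (Finset.erase_subset _ _ hb) hab
      · intro a ha
        have haP : a ∈ P := Finset.erase_subset _ _ ha
        have hax : x ≠ a := fun h => Finset.ne_of_mem_erase ha h.symm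
        exact (hp x hxP a haP hax).2
  -- compute the sigma card
  have hfiber : ∀ Q ∈ (B.powersetCard k).filter pred,
      (R.filter (fun x => ∀ a ∈ Q, c x ≠ c a)).card = R.card - k := by
    intro Q hQ
    simp only [Finset.mem_filter, Finset.mem_powersetCard] at hQ
    obtain ⟨⟨hQB, hQk⟩, hpQ⟩ := hQ
    have hsplit : (R.filter (fun x => ∀ a ∈ Q, c x ≠ c a)).card
        + (R.filter (fun x => ¬ ∀ a ∈ Q, c x ≠ c a)).card = R.card :=
      Finset.card_filter_add_card_filter_not _
    have hQinj : ∀ x ∈ Q, ∀ y ∈ Q, c x = c y → x = y := by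
      intro x hx y hy hxy
      by_contra hne
      exact (hpQ x hx y hy hne).2 hxy
    have hbad : (R.filter (fun x => ¬ ∀ a ∈ Q, c x ≠ c a)).card = k := by
      have h1 : (R.filter (fun x => ¬ ∀ a ∈ Q, c x ≠ c a)).image c = Q.image c := by
        ext z
        simp only [Finset.mem_image, Finset.mem_filter]
        constructor
        · rintro ⟨x, ⟨hxR, hxbad⟩, rfl⟩
          push_neg at hxbad
          obtain ⟨a, haQ, hca⟩ := hxbad
          exact ⟨a, haQ, hca.symm⟩
        · rintro ⟨a, haQ, rfl⟩
          obtain ⟨x, hxR, hcx⟩ := hdom a (hQB haQ)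
          exact ⟨x, ⟨hxR, by push_neg; exact ⟨a, haQ, hcx⟩⟩, hcx⟩
      have h2 : ((R.filter (fun x => ¬ ∀ a ∈ Q, c x ≠ c a)).image c).card
          = (R.filter (fun x => ¬ ∀ a ∈ Q, c x ≠ c a)).card := by
        refine Finset.card_image_of_injOn ?_
        intro x hx y hy hxy
        exact hcinj x (Finset.mem_filter.1 hx).1 y (Finset.mem_filter.1 hy).1 hxy
      have h3 : (Q.image c).card = Q.card := by
        refine Finset.card_image_of_injOn ?_
        intro x hx y hy hxy
        exact hQinj x hx y hy hxy
      rw [← hQk, ← h3, ← h1, h2]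
    omega
  rw [hnk, hnk, hnk, hsplitS, hpart0, hpart1, Finset.card_sigma]
  rw [Finset.sum_congr rfl hfiber, Finset.sum_const, smul_eq_mul]
  ring

def oddify (n : ℕ) : ℕ := if n % 2 = 1 then n else n - 1
def evenify (n : ℕ) : ℕ := if n % 2 = 0 then n else n - 1

/-- a row of `len` cells with row label `lbl`. -/
def rowF (lbl len : ℕ) : Finset (ℤ × ℤ) := (range len).image (fun v : ℕ => ((lbl:ℤ), (v:ℤ)))

lemma mem_rowF {lbl len : ℕ} {a : ℤ × ℤ} :
    a ∈ rowF lbl len ↔ a.1 = (lbl:ℤ) ∧ ∃ v < len, a.2 = (v:ℤ) := by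
  unfold rowF
  simp only [Finset.mem_image, Finset.mem_range]
  constructor
  · rintro ⟨v, hv, rfl⟩
    exact ⟨rfl, v, hv, rfl⟩
  · rintro ⟨h1, v, hv, h2⟩
    exact ⟨v, hv, by rw [← h1, ← h2]⟩

lemma card_rowF (lbl len : ℕ) : (rowF lbl len).card = len := by
  unfold rowF
  rw [Finset.card_image_of_injective _ (fun x y h => by simpa using h), Finset.card_range]

def NbX : ℕ → Finset (ℤ × ℤ)
  | 0 => ∅
  | m+1 => NbX m ∪ rowF m (oddify (m+1))

def NbY : ℕ → Finset (ℤ × ℤ)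
  | 0 => ∅
  | m+1 => NbY m ∪ rowF m (evenify (m+1))

lemma mem_NbX {m : ℕ} {a : ℤ × ℤ} :
    a ∈ NbX m ↔ ∃ u < m, ∃ v < oddify (u+1), a = ((u:ℤ), (v:ℤ)) := by
  induction m with
  | zero => simp [NbX]
  | succ m ih =>
    rw [NbX, Finset.mem_union, ih, mem_rowF]
    constructor
    · rintro (⟨u, hu, v, hv, rfl⟩ | ⟨h1, v, hv, h2⟩)
      · exact ⟨u, by omega, v, hv, rfl⟩
      · exact ⟨m, by omega, v, hv, by rw [Prod.ext_iff]; exact ⟨h1, h2⟩⟩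
    · rintro ⟨u, hu, v, hv, rfl⟩
      rcases Nat.lt_succ_iff_lt_or_eq.1 hu with h | rfl
      · exact Or.inl ⟨u, h, v, hv, rfl⟩
      · exact Or.inr ⟨rfl, v, hv, rfl⟩

lemma mem_NbY {m : ℕ} {a : ℤ × ℤ} :
    a ∈ NbY m ↔ ∃ u < m, ∃ v < evenify (u+1), a = ((u:ℤ), (v:ℤ)) := by
  induction m with
  | zero => simp [NbY]
  | succ m ih =>
    rw [NbY, Finset.mem_union, ih, mem_rowF]
    constructor
    · rintro (⟨u, hu, v, hv, rfl⟩ | ⟨h1, v, hv, h2⟩)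
      · exact ⟨u, by omega, v, hv, rfl⟩
      · exact ⟨m, by omega, v, hv, by rw [Prod.ext_iff]; exact ⟨h1, h2⟩⟩
    · rintro ⟨u, hu, v, hv, rfl⟩
      rcases Nat.lt_succ_iff_lt_or_eq.1 hu with h | rfl
      · exact Or.inl ⟨u, h, v, hv, rfl⟩
      · exact Or.inr ⟨rfl, v, hv, rfl⟩

lemma oddify_mono : Monotone oddify := by
  intro a b h
  unfold oddify
  split <;> split <;> omega

lemma evenify_mono : Monotone evenify := by
  intro a b h
  unfold evenify
  split <;> split <;> omega

lemma nk_NbX (m : ℕ) : ∀ k, nkA Prod.fst Prod.snd (NbX m) k = Af m k := by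
  induction m with
  | zero =>
    intro k
    cases k with
    | zero => rw [nkA_zero, Af_zero]
    | succ k =>
      show nkA Prod.fst Prod.snd (∅ : Finset (ℤ × ℤ)) (k+1) = _
      rw [nkA_empty, Af_eq_zero (by omega)]
  | succ m ih =>
    intro k
    cases k with
    | zero => rw [nkA_zero, Af_zero]
    | succ k =>
      have h1 : ∀ x ∈ rowF m (oddify (m+1)), ∀ y ∈ rowF m (oddify (m+1)),
          x.1 = y.1 := by
        intro x hx y hy
        rw [(mem_rowF.1 hx).1, (mem_rowF.1 hy).1]
      have h2 : ∀ x ∈ rowF m (oddify (m+1)), ∀ y ∈ rowF m (oddify (m+1)),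
          x.2 = y.2 → x = y := by
        intro x hx y hy hc
        rw [Prod.ext_iff]
        exact ⟨((mem_rowF.1 hx).1).trans ((mem_rowF.1 hy).1).symm, hc⟩
      have h3 : ∀ x ∈ rowF m (oddify (m+1)), ∀ a ∈ NbX m, x.1 ≠ a.1 := by
        intro x hx a ha
        obtain ⟨u, hu, v, hv, rfl⟩ := mem_NbX.1 ha
        rw [(mem_rowF.1 hx).1]
        intro h
        simp only [] at h
        have : (m:ℤ) = (u:ℤ) := h
        have : m = u := by exact_mod_cast this
        omega
      have h4 : ∀ a ∈ NbX m, ∃ x ∈ rowF m (oddify (m+1)), x.2 = a.2 := by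
        intro a ha
        obtain ⟨u, hu, v, hv, rfl⟩ := mem_NbX.1 ha
        refine ⟨((m:ℤ), (v:ℤ)), mem_rowF.2 ⟨rfl, v, ?_, rfl⟩, rfl⟩
        have := oddify_mono (show u+1 ≤ m+1 by omega)
        omega
      have hstep := nkA_add_row Prod.fst Prod.snd (NbX m) (rowF m (oddify (m+1))) k
        h1 h2 h3 h4
      rw [card_rowF] at hstep
      have hNb : NbX (m+1) = NbX m ∪ rowF m (oddify (m+1)) := rfl
      rw [hNb, hstep, ih (k+1), ih k]
      rcases Nat.even_or_odd m with ⟨t, rfl⟩ | ⟨t, rfl⟩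
      · have e1 : oddify (t+t+1) = 2*t+1 := by unfold oddify; split <;> omega
        have e2 : t+t+1 = 2*t+1 := by omega
        have e3 : t+t = 2*t := by omega
        rw [e1, e2, e3, Af_succ_even]
      · have e1 : oddify (2*t+1+1) = 2*t+1 := by unfold oddify; split <;> omega
        have e2 : 2*t+1+1 = 2*t+2 := by omega
        rw [e1, e2, Af_succ_odd]

lemma nk_NbY (m : ℕ) : ∀ k, nkA Prod.fst Prod.snd (NbY m) k = Bf m (k:ℤ) := by
  induction m with
  | zero =>
    intro k
    cases k with
    | zero => rw [nkA_zero]; exact_mod_cast (Bf_zero 0).symm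
    | succ k =>
      show nkA Prod.fst Prod.snd (∅ : Finset (ℤ × ℤ)) (k+1) = _
      rw [nkA_empty, Bf_eq_zero' (by exact_mod_cast Nat.succ_pos k)]
  | succ m ih =>
    intro k
    cases k with
    | zero => rw [nkA_zero]; exact_mod_cast (Bf_zero (m+1)).symm
    | succ k =>
      have h1 : ∀ x ∈ rowF m (evenify (m+1)), ∀ y ∈ rowF m (evenify (m+1)),
          x.1 = y.1 := by
        intro x hx y hy
        rw [(mem_rowF.1 hx).1, (mem_rowF.1 hy).1]
      have h2 : ∀ x ∈ rowF m (evenify (m+1)), ∀ y ∈ rowF m (evenify (m+1)),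
          x.2 = y.2 → x = y := by
        intro x hx y hy hc
        rw [Prod.ext_iff]
        exact ⟨((mem_rowF.1 hx).1).trans ((mem_rowF.1 hy).1).symm, hc⟩
      have h3 : ∀ x ∈ rowF m (evenify (m+1)), ∀ a ∈ NbY m, x.1 ≠ a.1 := by
        intro x hx a ha
        obtain ⟨u, hu, v, hv, rfl⟩ := mem_NbY.1 ha
        rw [(mem_rowF.1 hx).1]
        intro h
        simp only [] at h
        have : (m:ℤ) = (u:ℤ) := h
        have : m = u := by exact_mod_cast this
        omega
      have h4 : ∀ a ∈ NbY m, ∃ x ∈ rowF m (evenify (m+1)), x.2 = a.2 := by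
        intro a ha
        obtain ⟨u, hu, v, hv, rfl⟩ := mem_NbY.1 ha
        refine ⟨((m:ℤ), (v:ℤ)), mem_rowF.2 ⟨rfl, v, ?_, rfl⟩, rfl⟩
        have := evenify_mono (show u+1 ≤ m+1 by omega)
        omega
      have hstep := nkA_add_row Prod.fst Prod.snd (NbY m) (rowF m (evenify (m+1))) k
        h1 h2 h3 h4
      rw [card_rowF] at hstep
      have hNb : NbY (m+1) = NbY m ∪ rowF m (evenify (m+1)) := rfl
      rw [hNb, hstep, ih (k+1), ih k]
      have hc1 : ((k+1 : ℕ) : ℤ) = (k:ℤ)+1 := by push_cast; ring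
      rw [hc1]
      rcases Nat.even_or_odd m with ⟨t, rfl⟩ | ⟨t, rfl⟩
      · have e1 : evenify (t+t+1) = 2*t := by unfold evenify; split <;> omega
        have e2 : t+t+1 = 2*t+1 := by omega
        have e3 : t+t = 2*t := by omega
        rw [e1, e2, e3, Bf_succ_even]
      · have e1 : evenify (2*t+1+1) = 2*t+2 := by unfold evenify; split <;> omega
        have e2 : 2*t+1+1 = 2*t+2 := by omega
        rw [e1, e2, Bf_succ_odd]

lemma oddify_eq (n : ℕ) : oddify n = 2*((n+1)/2) - 1 := by
  unfold oddify; split <;> omega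
lemma evenify_eq (n : ℕ) : evenify n = 2*(n/2) := by
  unfold evenify; split <;> omega

/-- diagonal coordinates -/
def psi (p : ℕ × ℕ) : ℤ × ℤ := ((p.1:ℤ) + p.2, (p.1:ℤ) - p.2)

def bigB (m : ℕ) : Finset (ℤ × ℤ) := ((Finset.Icc 1 m) ×ˢ (Finset.Icc 1 m)).image psi

lemma mem_bigB {m : ℕ} {a : ℤ × ℤ} :
    a ∈ bigB m ↔ (a.1 + a.2) % 2 = 0 ∧ 2 ≤ a.1 + a.2 ∧ a.1 + a.2 ≤ 2*m
      ∧ 2 ≤ a.1 - a.2 ∧ a.1 - a.2 ≤ 2*m := by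
  unfold bigB
  simp only [Finset.mem_image, Finset.mem_product, Finset.mem_Icc]
  constructor
  · rintro ⟨⟨i, j⟩, ⟨⟨hi1, hi2⟩, hj1, hj2⟩, rfl⟩
    simp only [psi]
    constructor
    · omega
    · constructor
      · push_cast; omega
      · refine ⟨by push_cast; omega, by push_cast; omega, by push_cast; omega⟩
  · rintro ⟨hpar, h1, h2, h3, h4⟩
    refine ⟨(((a.1 + a.2)/2).toNat, ((a.1 - a.2)/2).toNat), ⟨⟨?_, ?_⟩, ?_, ?_⟩, ?_⟩
    · omega
    · omega
    · omega
    · omega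
    · unfold psi
      rw [Prod.ext_iff]
      constructor
      · simp only
        push_cast
        omega
      · simp only
        push_cast
        omega

def Ebd (m : ℕ) : Finset (ℤ × ℤ) := (bigB m).filter (fun a => a.1 % 2 = 0)
def Obd (m : ℕ) : Finset (ℤ × ℤ) := (bigB m).filter (fun a => ¬ a.1 % 2 = 0)

lemma bigB_eq_union (m : ℕ) : bigB m = Ebd m ∪ Obd m :=
  (Finset.filter_union_filter_not_eq _ _).symm

def Fm (m : ℕ) (u : ℤ) : ℤ := if u ≤ m+1 then u - 2 else 2*m+1-u
def Gm (v : ℤ) : ℤ := if 0 < v then v - 1 else -v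

def phi (m : ℕ) (a : ℤ × ℤ) : ℤ × ℤ := (Fm m a.1, Gm a.2)

lemma Fm_spec (m : ℕ) (u : ℤ) :
    (u ≤ m+1 ∧ Fm m u = u - 2) ∨ (m+1 < u ∧ Fm m u = 2*m+1-u) := by
  unfold Fm; split
  · exact Or.inl ⟨by assumption, rfl⟩
  · exact Or.inr ⟨by omega, rfl⟩

lemma Gm_spec (v : ℤ) : (0 < v ∧ Gm v = v - 1) ∨ (v ≤ 0 ∧ Gm v = -v) := by
  unfold Gm; split
  · exact Or.inl ⟨by assumption, rfl⟩
  · exact Or.inr ⟨by omega, rfl⟩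

lemma Ebd_image (m : ℕ) : (Ebd m).image (phi m) = NbX m := by
  ext a
  simp only [Finset.mem_image]
  constructor
  · rintro ⟨b, hb, rfl⟩
    rw [Ebd, Finset.mem_filter, mem_bigB] at hb
    obtain ⟨⟨hpar, h1, h2, h3, h4⟩, hu⟩ := hb
    rw [mem_NbX]
    refine ⟨(Fm m b.1).toNat, ?_, (Gm b.2).toNat, ?_, ?_⟩
    · rcases Fm_spec m b.1 with ⟨h5, h6⟩ | ⟨h5, h6⟩ <;> omega
    · rw [oddify_eq]
      rcases Fm_spec m b.1 with ⟨h5, h6⟩ | ⟨h5, h6⟩ <;>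
        rcases Gm_spec b.2 with ⟨h7, h8⟩ | ⟨h7, h8⟩ <;> omega
    · rw [Prod.ext_iff]
      unfold phi
      constructor
      · simp only
        rcases Fm_spec m b.1 with ⟨h5, h6⟩ | ⟨h5, h6⟩ <;> omega
      · simp only
        rcases Gm_spec b.2 with ⟨h7, h8⟩ | ⟨h7, h8⟩ <;> omega
  · intro ha
    rw [mem_NbX] at ha
    obtain ⟨u', hu', v', hv', rfl⟩ := ha
    rw [oddify_eq] at hv'
    -- choose preimage coordinates
    refine ⟨((if u' % 2 = 0 then (u':ℤ)+2 else 2*m+1-u'),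
            (if v' % 2 = 1 then (v':ℤ)+1 else -(v':ℤ))), ?_, ?_⟩
    · rw [Ebd, Finset.mem_filter, mem_bigB]
      dsimp only
      constructor
      · constructor
        · split <;> split <;> omega
        · refine ⟨?_, ?_, ?_, ?_⟩ <;> (split <;> split <;> omega)
      · split <;> omega
    · unfold phi Fm Gm
      rw [Prod.ext_iff]
      constructor
      · simp only
        split <;> split <;> omega
      · simp only
        split <;> split <;> omega

lemma Obd_image (m : ℕ) : (Obd m).image (phi m) = NbY m := by
  ext a
  simp only [Finset.mem_image]
  constructor
  · rintro ⟨b, hb, rfl⟩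
    rw [Obd, Finset.mem_filter, mem_bigB] at hb
    obtain ⟨⟨hpar, h1, h2, h3, h4⟩, hu⟩ := hb
    rw [mem_NbY]
    refine ⟨(Fm m b.1).toNat, ?_, (Gm b.2).toNat, ?_, ?_⟩
    · rcases Fm_spec m b.1 with ⟨h5, h6⟩ | ⟨h5, h6⟩ <;> omega
    · rw [evenify_eq]
      rcases Fm_spec m b.1 with ⟨h5, h6⟩ | ⟨h5, h6⟩ <;>
        rcases Gm_spec b.2 with ⟨h7, h8⟩ | ⟨h7, h8⟩ <;> omega
    · rw [Prod.ext_iff]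
      unfold phi
      constructor
      · simp only
        rcases Fm_spec m b.1 with ⟨h5, h6⟩ | ⟨h5, h6⟩ <;> omega
      · simp only
        rcases Gm_spec b.2 with ⟨h7, h8⟩ | ⟨h7, h8⟩ <;> omega
  · intro ha
    rw [mem_NbY] at ha
    obtain ⟨u', hu', v', hv', rfl⟩ := ha
    rw [evenify_eq] at hv'
    refine ⟨((if u' % 2 = 1 then (u':ℤ)+2 else 2*m+1-u'),
            (if v' % 2 = 0 then (v':ℤ)+1 else -(v':ℤ))), ?_, ?_⟩
    · rw [Obd, Finset.mem_filter, mem_bigB]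
      dsimp only
      constructor
      · constructor
        · split <;> split <;> omega
        · refine ⟨?_, ?_, ?_, ?_⟩ <;> (split <;> split <;> omega)
      · split <;> omega
    · unfold phi Fm Gm
      rw [Prod.ext_iff]
      constructor
      · simp only
        split <;> split <;> omega
      · simp only
        split <;> split <;> omega


lemma Ebd_parity {m : ℕ} {a : ℤ × ℤ} (h : a ∈ Ebd m) :
    a.1 % 2 = 0 ∧ a.2 % 2 = 0 := by
  rw [Ebd, Finset.mem_filter, mem_bigB] at h
  omega

lemma Obd_parity {m : ℕ} {a : ℤ × ℤ} (h : a ∈ Obd m) :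
    a.1 % 2 = 1 ∧ a.2 % 2 = 1 := by
  rw [Obd, Finset.mem_filter, mem_bigB] at h
  omega

lemma nk_Ebd (m k : ℕ) : nkA Prod.fst Prod.snd (Ebd m) k = Af m k := by
  rw [← nk_NbX m k, ← Ebd_image m]
  refine nkA_image _ _ _ _ _ _ _ ?_ ?_ ?_
  · intro a ha b hb hab
    obtain ⟨ha1, ha2⟩ := Ebd_parity (by exact_mod_cast ha)
    obtain ⟨hb1, hb2⟩ := Ebd_parity (by exact_mod_cast hb)
    have h1 : Fm m a.1 = Fm m b.1 := congrArg Prod.fst hab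
    have h2 : Gm a.2 = Gm b.2 := congrArg Prod.snd hab
    have e1 : a.1 = b.1 := by
      rcases Fm_spec m a.1 with ⟨p1, q1⟩ | ⟨p1, q1⟩ <;>
        rcases Fm_spec m b.1 with ⟨p2, q2⟩ | ⟨p2, q2⟩ <;> omega
    have e2 : a.2 = b.2 := by
      rcases Gm_spec a.2 with ⟨p1, q1⟩ | ⟨p1, q1⟩ <;>
        rcases Gm_spec b.2 with ⟨p2, q2⟩ | ⟨p2, q2⟩ <;> omega
    exact Prod.ext e1 e2
  · intro a ha b hb
    obtain ⟨ha1, ha2⟩ := Ebd_parity ha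
    obtain ⟨hb1, hb2⟩ := Ebd_parity hb
    show a.1 = b.1 ↔ Fm m a.1 = Fm m b.1
    constructor
    · intro h; rw [h]
    · intro h
      rcases Fm_spec m a.1 with ⟨p1, q1⟩ | ⟨p1, q1⟩ <;>
        rcases Fm_spec m b.1 with ⟨p2, q2⟩ | ⟨p2, q2⟩ <;> omega
  · intro a ha b hb
    obtain ⟨ha1, ha2⟩ := Ebd_parity ha
    obtain ⟨hb1, hb2⟩ := Ebd_parity hb
    show a.2 = b.2 ↔ Gm a.2 = Gm b.2
    constructor
    · intro h; rw [h]
    · intro h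
      rcases Gm_spec a.2 with ⟨p1, q1⟩ | ⟨p1, q1⟩ <;>
        rcases Gm_spec b.2 with ⟨p2, q2⟩ | ⟨p2, q2⟩ <;> omega

lemma nk_Obd (m k : ℕ) : nkA Prod.fst Prod.snd (Obd m) k = Bf m (k:ℤ) := by
  rw [← nk_NbY m k, ← Obd_image m]
  refine nkA_image _ _ _ _ _ _ _ ?_ ?_ ?_
  · intro a ha b hb hab
    obtain ⟨ha1, ha2⟩ := Obd_parity (by exact_mod_cast ha)
    obtain ⟨hb1, hb2⟩ := Obd_parity (by exact_mod_cast hb)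
    have h1 : Fm m a.1 = Fm m b.1 := congrArg Prod.fst hab
    have h2 : Gm a.2 = Gm b.2 := congrArg Prod.snd hab
    have e1 : a.1 = b.1 := by
      rcases Fm_spec m a.1 with ⟨p1, q1⟩ | ⟨p1, q1⟩ <;>
        rcases Fm_spec m b.1 with ⟨p2, q2⟩ | ⟨p2, q2⟩ <;> omega
    have e2 : a.2 = b.2 := by
      rcases Gm_spec a.2 with ⟨p1, q1⟩ | ⟨p1, q1⟩ <;>
        rcases Gm_spec b.2 with ⟨p2, q2⟩ | ⟨p2, q2⟩ <;> omega
    exact Prod.ext e1 e2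
  · intro a ha b hb
    obtain ⟨ha1, ha2⟩ := Obd_parity ha
    obtain ⟨hb1, hb2⟩ := Obd_parity hb
    show a.1 = b.1 ↔ Fm m a.1 = Fm m b.1
    constructor
    · intro h; rw [h]
    · intro h
      rcases Fm_spec m a.1 with ⟨p1, q1⟩ | ⟨p1, q1⟩ <;>
        rcases Fm_spec m b.1 with ⟨p2, q2⟩ | ⟨p2, q2⟩ <;> omega
  · intro a ha b hb
    obtain ⟨ha1, ha2⟩ := Obd_parity ha
    obtain ⟨hb1, hb2⟩ := Obd_parity hb
    show a.2 = b.2 ↔ Gm a.2 = Gm b.2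
    constructor
    · intro h; rw [h]
    · intro h
      rcases Gm_spec a.2 with ⟨p1, q1⟩ | ⟨p1, q1⟩ <;>
        rcases Gm_spec b.2 with ⟨p2, q2⟩ | ⟨p2, q2⟩ <;> omega

lemma bishop_nk (m k : ℕ) : bishopCount m k = nkA Prod.fst Prod.snd (bigB m) k := by
  have h1 : bishopCount m k
      = nkA (fun p : ℕ × ℕ => (p.1:ℤ) + p.2) (fun p : ℕ × ℕ => (p.1:ℤ) - p.2)
          ((Finset.Icc 1 m) ×ˢ (Finset.Icc 1 m)) k := by
    unfold bishopCount nkA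
    congr 1
    apply Finset.filter_congr
    intro P _
    constructor
    · intro h a ha b hb hab
      obtain ⟨x, y⟩ := h a ha b hb hab
      exact ⟨show (a.1:ℤ) + a.2 ≠ (b.1:ℤ) + b.2 by omega, y⟩
    · intro h a ha b hb hab
      obtain ⟨x, y⟩ := h a ha b hb hab
      have x' : (a.1:ℤ) + a.2 ≠ (b.1:ℤ) + b.2 := x
      exact ⟨by omega, y⟩
  rw [h1]
  have h2 := nkA_image (fun p : ℕ × ℕ => (p.1:ℤ) + p.2) (fun p : ℕ × ℕ => (p.1:ℤ) - p.2)
    Prod.fst Prod.snd psi ((Finset.Icc 1 m) ×ˢ (Finset.Icc 1 m)) k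
    ?_ (fun a _ b _ => Iff.rfl) (fun a _ b _ => Iff.rfl)
  · exact h2
  · intro a _ b _ h
    have h' : ((a.1:ℤ) + a.2, (a.1:ℤ) - a.2) = ((b.1:ℤ) + b.2, (b.1:ℤ) - b.2) := h
    rw [Prod.ext_iff] at h'
    obtain ⟨x, y⟩ := h'
    have x' : (a.1:ℤ) + a.2 = (b.1:ℤ) + b.2 := x
    have y' : (a.1:ℤ) - a.2 = (b.1:ℤ) - b.2 := y
    exact Prod.ext (by omega) (by omega)

theorem bishop_final (m k : ℕ) : bishopCount m k
    = ∑ j ∈ Finset.range (m + 1), Af m j * Bf m ((k:ℤ) - j) := by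
  rw [bishop_nk, bigB_eq_union, nkA_union_conv _ _ _ _ _
    (fun a ha b hb => by
      obtain ⟨x1, x2⟩ := Ebd_parity ha
      obtain ⟨y1, y2⟩ := Obd_parity hb
      exact ⟨by omega, by omega⟩)]
  have hterm : ∀ j ∈ range (k+1),
      nkA Prod.fst Prod.snd (Ebd m) j * nkA Prod.fst Prod.snd (Obd m) (k-j)
        = Af m j * Bf m ((k:ℤ) - j) := by
    intro j hj
    rw [nk_Ebd, nk_Obd]
    congr 1
    congr 1
    simp only [Finset.mem_range] at hj
    omega
  rw [Finset.sum_congr rfl hterm]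
  -- extend both sums to range (k+m+2)
  have hbig1 : ∑ j ∈ range (k+1), Af m j * Bf m ((k:ℤ) - j)
      = ∑ j ∈ range (k+m+2), Af m j * Bf m ((k:ℤ) - j) := by
    refine Finset.sum_subset (by intro x hx; simp only [Finset.mem_range] at *; omega) ?_
    intro j _ hj
    simp only [Finset.mem_range] at hj
    rw [Bf_eq_zero (by push_cast; omega), mul_zero]
  have hbig2 : ∑ j ∈ range (m+1), Af m j * Bf m ((k:ℤ) - j)
      = ∑ j ∈ range (k+m+2), Af m j * Bf m ((k:ℤ) - j) := by
    refine Finset.sum_subset (by intro x hx; simp only [Finset.mem_range] at *; omega) ?_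
    intro j _ hj
    simp only [Finset.mem_range] at hj
    rw [Af_eq_zero (by omega), zero_mul]
  rw [hbig1, ← hbig2]

/-- Arshon–Kotěšovec formula for nonattacking bishops on the square board. -/
theorem bishop_arshon_kotesovec (m k : ℕ) :
    bishopCount m k =
      ∑ j ∈ Finset.range (m + 1), ∑ i ∈ Finset.range ((m + 1) / 2 + 1),
        Nat.choose ((m + 1) / 2) i * stirlingZ (i + m / 2) ((m : ℤ) - j) *
          ∑ l ∈ Finset.range (m / 2 + 1),
            Nat.choose (m / 2) l * stirlingZ (l + (m + 1) / 2) ((m : ℤ) - k + j) := by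
  rw [bishop_final m k]
  refine Finset.sum_congr rfl fun j _ => ?_
  show Af m j * Bf m ((k:ℤ) - j) = _
  unfold Af Bf sumS
  rw [Finset.sum_mul]
  refine Finset.sum_congr rfl fun i _ => ?_
  have h : (m:ℤ) - ((k:ℤ) - (j:ℤ)) = (m:ℤ) - k + j := by ring
  rw [h]
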